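/- (Schoenberg's inequality, centered case) Let λ_1, ..., λ_n be the roots of a complex polynomial p of degree n ≥ 2 with Σ_{j=1}^n λ_j = 0, and let w_1, ..., w_{n-1} be the roots of p'. Then Σ_{k=1}^{n-1} |w_k|^2 ≤ ((n−2)/n) Σ_{j=1}^n |λ_j|^2. -/

import Mathlib

open Polynomial Finset

namespace SchoenbergAux

open Matrix

theorem eval_charpoly' (m : ℕ) (M : Matrix (Fin m) (Fin m) ℂ) (x : ℂ) :
    (M.charpoly).eval x = (x • (1 : Matrix (Fin m) (Fin m) ℂ) - M).det := by
  rw [Matrix.charpoly, ← Polynomial.coe_evalRingHom, RingHom.map_det]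
  congr 1
  ext i j
  by_cases h : i = j <;> simp [charmatrix_apply, Matrix.one_apply, h]

theorem card_of_charpoly_eq (m : ℕ) (B : Matrix (Fin m) (Fin m) ℂ) (s : Multiset ℂ)
    (h : B.charpoly = (s.map (fun μ => X - C μ)).prod) : Multiset.card s = m := by
  have h1 : B.charpoly.natDegree = m := by simp [B.charpoly_natDegree_eq_dim]
  have h2 : ((s.map (fun μ => X - C μ)).prod).natDegree = Multiset.card s := by
    rw [Polynomial.natDegree_multiset_prod_of_monic]
    · simp [Multiset.map_map, Function.comp_def]
    · intro f hf
      obtain ⟨μ, _, rfl⟩ := Multiset.mem_map.mp hf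
      exact monic_X_sub_C μ
  rw [h, h2] at h1; exact h1

theorem frob_eq_trace (m : ℕ) (B : Matrix (Fin m) (Fin m) ℂ) :
    ∑ i, ∑ j, ‖B i j‖ ^ 2 = (Matrix.trace (Bᴴ * B)).re := by
  simp [Matrix.trace, Matrix.mul_apply, Matrix.diag, Matrix.conjTranspose_apply,
    Complex.re_sum, Complex.sq_norm, Complex.normSq_apply, Complex.mul_re]
  rw [Finset.sum_comm]

theorem trace_conj (m : ℕ) (B U : Matrix (Fin m) (Fin m) ℂ) (h2 : U * Uᴴ = 1) :
    Matrix.trace ((Uᴴ * B * U)ᴴ * (Uᴴ * B * U)) = Matrix.trace (Bᴴ * B) := by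
  simp only [Matrix.conjTranspose_mul, Matrix.conjTranspose_conjTranspose, Matrix.mul_assoc]
  rw [← Matrix.mul_assoc U Uᴴ, h2, Matrix.one_mul, Matrix.trace_mul_comm]
  simp only [Matrix.mul_assoc]
  rw [h2, Matrix.mul_one]

theorem charpoly_unitary_conj (m : ℕ) (B U : Matrix (Fin m) (Fin m) ℂ) (h1 : Uᴴ * U = 1) :
    (Uᴴ * B * U).charpoly = B.charpoly := by
  have hcomm : ∀ A : Matrix (Fin m) (Fin m) ℂ[X],
      Matrix.scalar (Fin m) (X : ℂ[X]) * A = A * Matrix.scalar (Fin m) (X : ℂ[X]) :=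
    fun A => (Matrix.scalar_commute (X : ℂ[X]) (fun r => Commute.all _ _) A).eq
  have hmm : (C.mapMatrix Uᴴ) * (C.mapMatrix U) = 1 := by
    rw [← _root_.map_mul, h1, _root_.map_one]
  have key : charmatrix (Uᴴ * B * U)
      = (C.mapMatrix Uᴴ) * charmatrix B * (C.mapMatrix U) := by
    rw [charmatrix, charmatrix, Matrix.mul_sub, Matrix.sub_mul]
    congr 1
    · calc Matrix.scalar (Fin m) (X : ℂ[X])
          = (C.mapMatrix Uᴴ * C.mapMatrix U) * Matrix.scalar (Fin m) (X : ℂ[X]) := by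
            rw [hmm, Matrix.one_mul]
        _ = C.mapMatrix Uᴴ * Matrix.scalar (Fin m) (X : ℂ[X]) * C.mapMatrix U := by
            rw [Matrix.mul_assoc, ← hcomm, ← Matrix.mul_assoc]
    · rw [_root_.map_mul, _root_.map_mul]
  rw [Matrix.charpoly, key, Matrix.det_mul, Matrix.det_mul, Matrix.charpoly]
  have h3 : (C.mapMatrix Uᴴ).det * (C.mapMatrix U).det = 1 := by
    rw [← Matrix.det_mul, hmm, Matrix.det_one]
  calc (C.mapMatrix Uᴴ).det * B.charmatrix.det * (C.mapMatrix U).det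
      = (C.mapMatrix Uᴴ).det * (C.mapMatrix U).det * B.charmatrix.det := by ring
    _ = B.charmatrix.det := by rw [h3, one_mul]

/-- Schur's inequality: the sum of the squared moduli of the eigenvalues of a complex
matrix is at most its squared Frobenius norm. -/
theorem schur_aux : ∀ (m : ℕ) (B : Matrix (Fin m) (Fin m) ℂ) (s : Multiset ℂ),
    B.charpoly = (s.map (fun μ => X - C μ)).prod →
    (s.map (fun μ => ‖μ‖ ^ 2)).sum ≤ ∑ i, ∑ j, ‖B i j‖ ^ 2 := by
  intro m
  induction m with
  | zero =>
    intro B s h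
    have := card_of_charpoly_eq 0 B s h
    rw [Multiset.card_eq_zero] at this
    subst this
    simp
  | succ k ih =>
    intro B s h
    have hcard := card_of_charpoly_eq _ B s h
    have hs0 : s ≠ 0 := by
      intro h0; rw [h0] at hcard; simp at hcard
    obtain ⟨μ, hμs⟩ := Multiset.exists_mem_of_ne_zero hs0
    obtain ⟨t, rfl⟩ := Multiset.exists_cons_of_mem hμs
    rw [Multiset.map_cons, Multiset.prod_cons] at h
    have hroot : (μ • (1 : Matrix (Fin (k+1)) (Fin (k+1)) ℂ) - B).det = 0 := by
      rw [← eval_charpoly', h]; simp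
    obtain ⟨v, hv, hv2⟩ := (Matrix.exists_mulVec_eq_zero_iff).2 hroot
    have heig : B.mulVec v = μ • v := by
      rw [Matrix.sub_mulVec, Matrix.smul_mulVec, Matrix.one_mulVec, sub_eq_zero] at hv2
      exact hv2.symm
    set v' : EuclideanSpace ℂ (Fin (k+1)) := WithLp.toLp 2 v with hv'def
    have hv' : v' ≠ 0 := by
      intro h0; apply hv; simpa [hv'def] using congrArg WithLp.ofLp h0
    set c : ℂ := ((‖v'‖⁻¹ : ℝ) : ℂ) with hc
    set u : EuclideanSpace ℂ (Fin (k+1)) := c • v' with hu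
    have hnu : ‖u‖ = 1 := by
      rw [hu, norm_smul, hc]
      simp only [Complex.norm_real, norm_inv, norm_norm]
      exact inv_mul_cancel₀ (norm_ne_zero_iff.2 hv')
    have heigu : B.mulVec u = μ • u := by
      show B.mulVec (c • v) = μ • (c • v)
      rw [Matrix.mulVec_smul, heig, smul_comm]
    have card : Module.finrank ℂ (EuclideanSpace ℂ (Fin (k+1))) = Fintype.card (Fin (k+1)) := by
      simp
    have horth : Orthonormal ℂ (Set.restrict {(0 : Fin (k+1))} (fun _ => u)) := by
      constructor
      · intro i; exact hnu
      · intro i j hij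
        exact absurd (Subtype.ext ((Set.eq_of_mem_singleton i.2).trans
          (Set.eq_of_mem_singleton j.2).symm)) hij
    obtain ⟨b, hb⟩ := horth.exists_orthonormalBasis_extension_of_card_eq card
    have hb0 : b 0 = u := hb 0 rfl
    set U : Matrix (Fin (k+1)) (Fin (k+1)) ℂ := Matrix.of (fun i j => b j i) with hU
    have hinner : ∀ i j, ∑ l, (starRingEnd ℂ) (b i l) * b j l = if i = j then 1 else 0 := by
      intro i j
      have := orthonormal_iff_ite.mp b.orthonormal i j
      rw [← this, PiLp.inner_apply]
      simp [RCLike.inner_apply]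
      exact Finset.sum_congr rfl fun _ _ => mul_comm _ _
    have h1 : Uᴴ * U = 1 := by
      ext i j
      rw [Matrix.mul_apply, Matrix.one_apply]
      simp only [Matrix.conjTranspose_apply, hU, Matrix.of_apply, Matrix.star_apply]
      exact hinner i j
    have h2 : U * Uᴴ = 1 := mul_eq_one_comm.mp h1
    set T : Matrix (Fin (k+1)) (Fin (k+1)) ℂ := Uᴴ * B * U with hT
    have hT0 : ∀ i, T i 0 = if i = 0 then μ else 0 := by
      intro i
      have hBU : ∀ l, (B * U) l 0 = μ * u l := by
        intro l
        have : (B * U) l 0 = B.mulVec u l := by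
          rw [Matrix.mul_apply, Matrix.mulVec]
          simp only [hU, Matrix.of_apply, hb0, dotProduct]
        rw [this, heigu]
        simp [mul_comm]
      rw [hT, Matrix.mul_assoc, Matrix.mul_apply]
      simp only [hBU]
      simp only [Matrix.conjTranspose_apply, hU, Matrix.of_apply, Matrix.star_apply, hBU]
      calc ∑ x, star (b i x) * (μ * u x)
          = μ * ∑ x, (starRingEnd ℂ) (b i x) * b 0 x := by
            rw [Finset.mul_sum]
            congr 1; funext x
            rw [hb0, starRingEnd_apply]; ring
        _ = if i = 0 then μ else 0 := by rw [hinner i 0]; split <;> simp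
    have hT00 : T 0 0 = μ := by rw [hT0 0]; simp
    set T' : Matrix (Fin k) (Fin k) ℂ := T.submatrix Fin.succ Fin.succ with hT'
    have hfac : T.charpoly = (X - C μ) * T'.charpoly := by
      rw [Matrix.charpoly, Matrix.det_succ_column_zero]
      rw [Finset.sum_eq_single (0 : Fin (k+1))]
      · have hc00 : charmatrix T 0 0 = X - C μ := by rw [charmatrix_apply_eq, hT00]
        rw [hc00]
        simp only [Fin.val_zero, pow_zero, one_mul, Fin.succAbove_zero]
        congr 1
        rw [Matrix.charpoly]
        congr 1
        refine Matrix.ext fun i j => ?_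
        by_cases hij : i = j
        · subst hij
          rw [Matrix.submatrix_apply, charmatrix_apply_eq, charmatrix_apply_eq]
          rfl
        · rw [Matrix.submatrix_apply,
            charmatrix_apply_ne _ _ _ (fun hcc => hij (Fin.succ_injective _ hcc)),
            charmatrix_apply_ne _ _ _ hij]
          rfl
      · intro i _ hi
        have : charmatrix T i 0 = 0 := by
          rw [charmatrix_apply_ne _ _ _ hi, hT0 i, if_neg hi]; simp
        rw [this, mul_zero, zero_mul]
      · intro h0; exact absurd (Finset.mem_univ 0) h0
    have hchT : T.charpoly = B.charpoly := charpoly_unitary_conj _ B U h1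
    have ht' : T'.charpoly = (t.map (fun μ => X - C μ)).prod := by
      have hne : (X - C μ) ≠ (0 : ℂ[X]) := X_sub_C_ne_zero μ
      apply mul_left_cancel₀ hne
      rw [← hfac, hchT, h]
    have hIH := ih T' t ht'
    have hF : ∑ i, ∑ j, ‖T i j‖ ^ 2 = ∑ i, ∑ j, ‖B i j‖ ^ 2 := by
      rw [frob_eq_trace, frob_eq_trace, hT, trace_conj _ B U h2]
    have hrow : ‖μ‖ ^ 2 ≤ ∑ j, ‖T 0 j‖ ^ 2 := by
      have := Finset.single_le_sum (f := fun j => ‖T 0 j‖ ^ 2)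
        (fun j _ => by positivity) (Finset.mem_univ (0 : Fin (k+1)))
      simpa [hT00] using this
    have hrest : ∀ i : Fin k,
        ∑ j : Fin k, ‖T' i j‖ ^ 2 ≤ ∑ j, ‖T i.succ j‖ ^ 2 := by
      intro i
      rw [Fin.sum_univ_succ (fun j => ‖T i.succ j‖ ^ 2)]
      exact le_add_of_nonneg_left (by positivity)
    rw [Multiset.map_cons, Multiset.sum_cons]
    calc ‖μ‖ ^ 2 + (t.map (fun μ => ‖μ‖ ^ 2)).sum
        ≤ ‖μ‖ ^ 2 + ∑ i, ∑ j, ‖T' i j‖ ^ 2 := by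
          exact add_le_add le_rfl hIH
      _ ≤ (∑ j, ‖T 0 j‖ ^ 2) + ∑ i : Fin k, ∑ j, ‖T i.succ j‖ ^ 2 :=
          add_le_add hrow (Finset.sum_le_sum fun i _ => hrest i)
      _ = ∑ i, ∑ j, ‖T i j‖ ^ 2 :=
          (Fin.sum_univ_succ (fun i => ∑ j, ‖T i j‖ ^ 2)).symm
      _ = ∑ i, ∑ j, ‖B i j‖ ^ 2 := hF

theorem det_compression (n : ℕ) (hn : 2 ≤ n) (lam : Fin n → ℂ)
    (hsum : ∑ j : Fin n, lam j = 0) (x : ℂ) (hx : ∀ i, x - lam i ≠ 0) :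
    (x • (1 : Matrix (Fin n) (Fin n) ℂ)
        - Matrix.of (fun i j => (if i = j then lam i else 0) - (lam i + lam j) / n)).det
      = x * (n : ℂ)⁻¹ * ∑ j, ∏ i ∈ univ.erase j, (x - lam i) := by
  have hnC : ((n : ℕ) : ℂ) ≠ 0 := Nat.cast_ne_zero.2 (by omega)
  set r : Fin n → ℂ := fun i => (x - lam i)⁻¹ with hr
  set D : Matrix (Fin n) (Fin n) ℂ := Matrix.diagonal (fun i => x - lam i) with hD
  set E : Matrix (Fin n) (Fin n) ℂ := Matrix.diagonal r with hE
  set Uu : Matrix (Fin n) (Fin 2) ℂ := Matrix.of (fun i k => if k = 0 then lam i else 1) with hUu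
  set Vv : Matrix (Fin 2) (Fin n) ℂ :=
    Matrix.of (fun k j => if k = 0 then (n:ℂ)⁻¹ else lam j * (n:ℂ)⁻¹) with hVv
  have hDE : D * E = 1 := by
    rw [hD, hE, Matrix.diagonal_mul_diagonal]
    rw [show (fun i => (x - lam i) * r i) = fun _ => 1 from
      funext fun i => mul_inv_cancel₀ (hx i), Matrix.diagonal_one]
  have hsplit : x • (1 : Matrix (Fin n) (Fin n) ℂ)
      - Matrix.of (fun i j => (if i = j then lam i else 0) - (lam i + lam j) / n)
      = D * (1 + E * (Uu * Vv)) := by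
    rw [Matrix.mul_add, Matrix.mul_one, ← Matrix.mul_assoc, hDE, Matrix.one_mul]
    ext i j
    rw [Matrix.add_apply, Matrix.mul_apply, Fin.sum_univ_two]
    by_cases h : i = j
    · subst h
      simp only [Matrix.sub_apply, Matrix.smul_apply, Matrix.one_apply_eq, Matrix.of_apply,
        if_pos rfl, hD, Matrix.diagonal_apply_eq, hUu, hVv, smul_eq_mul, mul_one]
      simp only [Matrix.of_apply, if_pos rfl, one_ne_zero, if_neg (by decide : (1:Fin 2) ≠ 0),
        ↓reduceIte]
      field_simp
      ring
    · simp only [Matrix.sub_apply, Matrix.smul_apply, Matrix.one_apply_ne h, Matrix.of_apply,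
        if_neg h, hD, Matrix.diagonal_apply_ne _ h, hUu, hVv, smul_eq_mul, mul_zero]
      simp only [Matrix.of_apply, if_pos rfl, if_neg (by decide : (1:Fin 2) ≠ 0), ↓reduceIte]
      field_simp
      ring
  rw [hsplit, Matrix.det_mul]
  have hassoc : E * (Uu * Vv) = (E * Uu) * Vv := by rw [Matrix.mul_assoc]
  rw [hassoc, Matrix.det_one_add_mul_comm]
  set s0 : ℂ := ∑ j, r j with hs0
  set s1 : ℂ := ∑ j, lam j * r j with hs1
  set s2 : ℂ := ∑ j, lam j * lam j * r j with hs2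
  set W : Matrix (Fin 2) (Fin 2) ℂ := 1 + Vv * (E * Uu) with hW
  have hent : ∀ a b : Fin 2, W a b
      = (if a = b then 1 else 0) + ∑ j, (Vv a j) * (r j * Uu j b) := by
    intro a b
    rw [hW, Matrix.add_apply, Matrix.mul_apply, Matrix.one_apply]
    congr 1
    refine Finset.sum_congr rfl fun j _ => ?_
    rw [Matrix.mul_apply, hE]
    congr 1
    rw [Finset.sum_eq_single j (fun j1 _ hne => by
      rw [Matrix.diagonal_apply_ne' _ hne, zero_mul]) (fun h => absurd (Finset.mem_univ j) h)]
    rw [Matrix.diagonal_apply_eq]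
  have c1 : ∑ j, (Vv 0 j) * (r j * Uu j 0) = (n:ℂ)⁻¹ * s1 := by
    rw [hs1, Finset.mul_sum]
    refine Finset.sum_congr rfl fun j _ => ?_
    simp only [hVv, hUu, Matrix.of_apply, reduceIte,
      if_neg (show ¬(1:Fin 2) = 0 from by decide)]
    ring
  have c2 : ∑ j, (Vv 0 j) * (r j * Uu j 1) = (n:ℂ)⁻¹ * s0 := by
    rw [hs0, Finset.mul_sum]
    refine Finset.sum_congr rfl fun j _ => ?_
    simp only [hVv, hUu, Matrix.of_apply, reduceIte,
      if_neg (show ¬(1:Fin 2) = 0 from by decide)]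
    ring
  have c3 : ∑ j, (Vv 1 j) * (r j * Uu j 0) = (n:ℂ)⁻¹ * s2 := by
    rw [hs2, Finset.mul_sum]
    refine Finset.sum_congr rfl fun j _ => ?_
    simp only [hVv, hUu, Matrix.of_apply, reduceIte,
      if_neg (show ¬(1:Fin 2) = 0 from by decide)]
    ring
  have c4 : ∑ j, (Vv 1 j) * (r j * Uu j 1) = (n:ℂ)⁻¹ * s1 := by
    rw [hs1, Finset.mul_sum]
    refine Finset.sum_congr rfl fun j _ => ?_
    simp only [hVv, hUu, Matrix.of_apply, reduceIte,
      if_neg (show ¬(1:Fin 2) = 0 from by decide)]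
    ring
  have hdetW : W.det
      = (1 + (n:ℂ)⁻¹ * s1) * (1 + (n:ℂ)⁻¹ * s1) - ((n:ℂ)⁻¹ * s0) * ((n:ℂ)⁻¹ * s2) := by
    rw [Matrix.det_fin_two, hent, hent, hent, hent, c1, c2, c3, c4]
    norm_num
  have hs1x : s1 = x * s0 - n := by
    rw [hs1, hs0]
    calc ∑ j, lam j * r j = ∑ j, (x * r j - 1) := by
          refine Finset.sum_congr rfl fun j _ => ?_
          have h1 : (x - lam j) * r j = 1 := mul_inv_cancel₀ (hx j)
          calc lam j * r j = x * r j - (x - lam j) * r j := by ring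
            _ = x * r j - 1 := by rw [h1]
      _ = x * (∑ j, r j) - n := by
          rw [Finset.sum_sub_distrib, ← Finset.mul_sum]
          simp
  have hs2x : s2 = x * s1 := by
    rw [hs2, hs1, Finset.mul_sum]
    have : ∑ j, lam j * lam j * r j = ∑ j, (x * (lam j * r j) - lam j) := by
      refine Finset.sum_congr rfl fun j _ => ?_
      have h1 : (x - lam j) * r j = 1 := mul_inv_cancel₀ (hx j)
      calc lam j * lam j * r j = x * (lam j * r j) - lam j * ((x - lam j) * r j) := by ring
        _ = x * (lam j * r j) - lam j := by rw [h1, mul_one]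
    rw [this, Finset.sum_sub_distrib, hsum, sub_zero]
  have hdetW2 : W.det = x * s0 * (n:ℂ)⁻¹ := by
    rw [hdetW, hs2x, hs1x]
    field_simp
    ring
  have hdetD : D.det = ∏ i, (x - lam i) := by rw [hD, Matrix.det_diagonal]
  have hps0 : (∏ i, (x - lam i)) * s0 = ∑ j, ∏ i ∈ univ.erase j, (x - lam i) := by
    rw [hs0, Finset.mul_sum]
    refine Finset.sum_congr rfl fun j _ => ?_
    rw [← Finset.mul_prod_erase univ _ (Finset.mem_univ j), mul_right_comm,
      mul_inv_cancel₀ (hx j), one_mul]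
  rw [hdetW2, hdetD, ← hps0]
  ring

theorem deriv_p (n : ℕ) (lam : Fin n → ℂ) (p : ℂ[X])
    (hp : p = ∏ j : Fin n, (X - C (lam j))) :
    Polynomial.derivative p = ∑ j : Fin n, ∏ i ∈ univ.erase j, (X - C (lam i)) := by
  rw [hp, Finset.prod_eq_multiset_prod, Polynomial.derivative_prod,
    Finset.sum_eq_multiset_sum]
  congr 1
  refine Multiset.map_congr rfl fun i _ => ?_
  rw [derivative_sub, derivative_X, derivative_C, sub_zero, mul_one,
    Finset.prod_eq_multiset_prod, Finset.erase_val]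

theorem frob_compression (n : ℕ) (hn : 2 ≤ n) (lam : Fin n → ℂ)
    (hsum : ∑ j : Fin n, lam j = 0) :
    ∑ i, ∑ j, ‖(Matrix.of (fun i j =>
        (if i = j then lam i else 0) - (lam i + lam j) / n) : Matrix (Fin n) (Fin n) ℂ) i j‖ ^ 2
      = ((n:ℝ) - 2)/n * ∑ j, ‖lam j‖^2 := by
  have hnR : (n:ℝ) ≠ 0 := Nat.cast_ne_zero.2 (by omega)
  have hnC : ((n:ℕ):ℂ) ≠ 0 := Nat.cast_ne_zero.2 (by omega)
  set cj : ℂ →+* ℂ := (starRingEnd ℂ : ℂ →+* ℂ) with hcj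
  set L : ℂ := ∑ j, lam j * cj (lam j) with hLdef
  have hc0 : ∑ j, cj (lam j) = 0 := by rw [← _root_.map_sum, hsum, map_zero]
  set Bm : Matrix (Fin n) (Fin n) ℂ :=
    Matrix.of (fun i j => (if i = j then lam i else 0) - (lam i + lam j) / n) with hBm
  have hentry : ∀ i j : Fin n, (Bm i j) * cj (Bm i j)
      = (if i = j then lam i * cj (lam i)
            - lam i * (cj (lam i) + cj (lam j)) * (n:ℂ)⁻¹
            - (lam i + lam j) * (n:ℂ)⁻¹ * cj (lam i) else 0)
        + (lam i + lam j) * (cj (lam i) + cj (lam j)) * ((n:ℂ)⁻¹ * (n:ℂ)⁻¹) := by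
    intro i j
    have hBme : Bm i j = (if i = j then lam i else 0) - (lam i + lam j) * (n:ℂ)⁻¹ := by
      rw [hBm]; simp only [Matrix.of_apply, div_eq_mul_inv]
    have hconj : cj (Bm i j)
        = (if i = j then cj (lam i) else 0) - (cj (lam i) + cj (lam j)) * (n:ℂ)⁻¹ := by
      rw [hBme, _root_.map_sub, _root_.map_mul, _root_.map_add, map_inv₀, map_natCast,
        apply_ite cj, map_zero]
    rw [hconj, hBme]
    by_cases h : i = j
    · subst h; simp only [eq_self_iff_true, if_true]; ring
    · simp only [if_neg h]; ring
  have hsum1 : ∑ i : Fin n, ∑ j : Fin n, (if i = j then lam i * cj (lam i)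
            - lam i * (cj (lam i) + cj (lam j)) * (n:ℂ)⁻¹
            - (lam i + lam j) * (n:ℂ)⁻¹ * cj (lam i) else 0)
      = L * (1 - 4 * (n:ℂ)⁻¹) := by
    rw [hLdef, Finset.sum_mul]
    refine Finset.sum_congr rfl fun i _ => ?_
    rw [Finset.sum_ite_eq univ i, if_pos (Finset.mem_univ i)]
    ring
  have hdouble : ∑ i : Fin n, ∑ j : Fin n, (lam i + lam j) * (cj (lam i) + cj (lam j))
      = (2 * (n:ℂ)) * L := by
    have expand : ∀ i j : Fin n, (lam i + lam j) * (cj (lam i) + cj (lam j))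
        = (lam i * cj (lam i) + lam j * cj (lam j))
          + (lam i * cj (lam j) + lam j * cj (lam i)) := fun i j => by ring
    simp_rw [expand, Finset.sum_add_distrib]
    have e1 : ∑ _i : Fin n, ∑ _j : Fin n, lam _i * cj (lam _i) = (n:ℂ) * L := by
      simp only [Finset.sum_const, Finset.card_univ, Fintype.card_fin, nsmul_eq_mul]
      rw [← Finset.mul_sum, hLdef]
    have e2 : ∑ _i : Fin n, ∑ j : Fin n, lam j * cj (lam j) = (n:ℂ) * L := by
      rw [← hLdef]
      simp only [Finset.sum_const, Finset.card_univ, Fintype.card_fin, nsmul_eq_mul]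
    have e3 : ∑ i : Fin n, ∑ j : Fin n, lam i * cj (lam j) = 0 := by
      simp_rw [← Finset.mul_sum, hc0, mul_zero, Finset.sum_const_zero]
    have e4 : ∑ i : Fin n, ∑ j : Fin n, lam j * cj (lam i) = 0 := by
      simp_rw [← Finset.sum_mul, hsum, zero_mul, Finset.sum_const_zero]
    rw [e1, e2, e3, e4]
    ring
  have hsum2 : ∑ i : Fin n, ∑ j : Fin n,
        (lam i + lam j) * (cj (lam i) + cj (lam j)) * ((n:ℂ)⁻¹ * (n:ℂ)⁻¹)
      = L * (2 * (n:ℂ)⁻¹) := by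
    simp_rw [← Finset.sum_mul]
    rw [hdouble]
    field_simp
  have hcsum : ∑ i, ∑ j, Bm i j * cj (Bm i j) = L * (1 - 2*(n:ℂ)⁻¹) := by
    simp_rw [hentry, Finset.sum_add_distrib]
    rw [hsum1, hsum2]
    field_simp
    ring
  have habs : ∀ z : ℂ, (‖z‖)^2 = (z * cj z).re := by
    intro z
    rw [hcj, Complex.mul_conj, Complex.sq_norm]
    simp
  have hre : ∑ i, ∑ j, ‖Bm i j‖ ^ 2 = (∑ i, ∑ j, Bm i j * cj (Bm i j)).re := by
    rw [Complex.re_sum]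
    refine Finset.sum_congr rfl fun i _ => ?_
    rw [Complex.re_sum]
    exact Finset.sum_congr rfl fun j _ => habs _
  have hL : L = ((∑ j, ‖lam j‖^2 : ℝ) : ℂ) := by
    rw [hLdef, Complex.ofReal_sum]
    refine Finset.sum_congr rfl fun j _ => ?_
    rw [hcj, Complex.mul_conj, Complex.sq_norm]
  have hcast : (1 - 2*(n:ℂ)⁻¹) = (((1:ℝ) - 2 * (n:ℝ)⁻¹ : ℝ) : ℂ) := by push_cast; ring
  rw [hre, hcsum, hL, hcast, ← Complex.ofReal_mul, Complex.ofReal_re]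
  field_simp

end SchoenbergAux

open SchoenbergAux Matrix in
/-- Schoenberg's inequality, centered case: if the roots `λ_j` of a degree-`n`
complex polynomial `p` (`n ≥ 2`) sum to zero and `w_k` are the roots of `p'`, then
`Σ |w_k|² ≤ ((n-2)/n) Σ |λ_j|²`. -/
theorem schoenberg_centered (n : ℕ) (hn : 2 ≤ n)
    (lam : Fin n → ℂ) (w : Fin (n - 1) → ℂ) (p : ℂ[X])
    (hp : p = ∏ j : Fin n, (X - C (lam j)))
    (hsum : ∑ j : Fin n, lam j = 0)
    (hw : Polynomial.derivative p = C ((n : ℕ) : ℂ) * ∏ k : Fin (n - 1), (X - C (w k))) :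
    ∑ k : Fin (n - 1), ‖w k‖ ^ 2
      ≤ (((n : ℝ) - 2) / n) * ∑ j : Fin n, ‖lam j‖ ^ 2 := by
  have hnC : ((n:ℕ):ℂ) ≠ 0 := Nat.cast_ne_zero.2 (by omega)
  have hpne : p ≠ 0 := by
    rw [hp]
    exact (monic_prod_of_monic _ _ (fun i _ => monic_X_sub_C (lam i))).ne_zero
  set Bm : Matrix (Fin n) (Fin n) ℂ :=
    Matrix.of (fun i j => (if i = j then lam i else 0) - (lam i + lam j) / n) with hBm
  -- charpoly of the compression
  have key : Bm.charpoly = X * ∏ k : Fin (n-1), (X - C (w k)) := by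
    apply Polynomial.eq_of_infinite_eval_eq
    apply Set.Infinite.mono (s := {x : ℂ | ¬ p.IsRoot x})
    · intro x hx
      have hx' : p.eval x ≠ 0 := hx
      have hxi : ∀ i, x - lam i ≠ 0 := by
        intro i hzero
        apply hx'
        rw [hp, eval_prod]
        refine Finset.prod_eq_zero (Finset.mem_univ i) ?_
        simpa using hzero
      have hder_eval : Polynomial.eval x (Polynomial.derivative p)
          = ∑ j, ∏ i ∈ univ.erase j, (x - lam i) := by
        rw [deriv_p n lam p hp, eval_finset_sum]
        refine Finset.sum_congr rfl fun j _ => ?_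
        rw [eval_prod]
        exact Finset.prod_congr rfl fun i _ => by simp
      have hw_eval : Polynomial.eval x (Polynomial.derivative p)
          = (n:ℂ) * ∏ k : Fin (n-1), (x - w k) := by
        rw [hw]
        simp [eval_prod]
      show Bm.charpoly.eval x = _
      rw [eval_charpoly', hBm, det_compression n hn lam hsum x hxi, ← hder_eval, hw_eval]
      rw [eval_mul, eval_X, eval_prod]
      have : ∏ k : Fin (n-1), Polynomial.eval x (X - C (w k))
          = ∏ k : Fin (n-1), (x - w k) := Finset.prod_congr rfl fun k _ => by simp
      rw [this]
      field_simp
    · exact (Polynomial.finite_setOf_isRoot hpne).infinite_compl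
  -- package the eigenvalues as a multiset
  set s : Multiset ℂ := (0:ℂ) ::ₘ Multiset.map w Finset.univ.val with hs
  have hprod : (s.map (fun μ => X - C μ)).prod = X * ∏ k : Fin (n-1), (X - C (w k)) := by
    rw [hs, Multiset.map_cons, Multiset.prod_cons, Multiset.map_map, map_zero, sub_zero,
      Finset.prod_eq_multiset_prod]
    rfl
  have hsum_s : (s.map (fun μ => ‖μ‖ ^ 2)).sum
      = ∑ k : Fin (n-1), ‖w k‖ ^ 2 := by
    rw [hs, Multiset.map_cons, Multiset.sum_cons, Multiset.map_map,
      Finset.sum_eq_multiset_sum]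
    simp
  have hschur := schur_aux n Bm s (by rw [hprod, key])
  rw [hsum_s] at hschur
  calc ∑ k : Fin (n-1), ‖w k‖ ^ 2
      ≤ ∑ i, ∑ j, ‖Bm i j‖ ^ 2 := hschur
    _ = ((n:ℝ) - 2)/n * ∑ j, ‖lam j‖^2 := frob_compression n hn lam hsum
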